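/- Let p > 1, l > 1, and let c₀, k₀ : [0,∞) → ℝ be continuous and nonnegative with ∫₀^T (c₀(t) + k₀(t)) dt → ∞ as T → ∞. Then for every w₀ > 0 there is no differentiable function w : [0,∞) → ℝ with w(0) = w₀ and w′(t) = c₀(t) w(t)^p + k₀(t) w(t)^l for all t ≥ 0. -/
import Mathlib


open MeasureTheory Set Filter

open Topology

/-- If `p > 1`, `l > 1`, `c₀, k₀` are continuous and nonnegative with
`∫₀^T (c₀ + k₀) → ∞` as `T → ∞`, then for every `w₀ > 0` the Cauchy problem
`w′ = c₀(t)w^p + k₀(t)w^l`, `w(0) = w₀` has no global solution. -/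
theorem stmt_6 (p l : ℝ) (hp : 1 < p) (hl : 1 < l) (c₀ k₀ : ℝ → ℝ)
    (hc_cont : ContinuousOn c₀ (Ici 0)) (hc_nonneg : ∀ t ≥ (0:ℝ), 0 ≤ c₀ t)
    (hk_cont : ContinuousOn k₀ (Ici 0)) (hk_nonneg : ∀ t ≥ (0:ℝ), 0 ≤ k₀ t)
    (hdiv : Tendsto (fun T => ∫ t in (0:ℝ)..T, (c₀ t + k₀ t)) atTop atTop) :
    ∀ w₀ : ℝ, 0 < w₀ →
      ¬ ∃ w : ℝ → ℝ, w 0 = w₀ ∧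
        ∀ t ≥ (0:ℝ), HasDerivAt w (c₀ t * w t ^ p + k₀ t * w t ^ l) t := by
  rintro w₀ hw₀ ⟨w, hw0, hw'⟩
  have hwc : ∀ t ≥ (0:ℝ), ContinuousAt w t := fun t ht => (hw' t ht).continuousAt
  set m : ℝ := w₀ / 2 with hm_def
  have hm : 0 < m := by positivity
  have hmw : m < w₀ := by simp only [hm_def]; linarith
  -- Step B: positivity barrier
  have hpos : ∀ t ≥ (0:ℝ), m < w t := by
    by_contra hB
    push_neg at hB
    obtain ⟨t₁', ht₁', hwt₁'⟩ := hB
    set B : Set ℝ := {t | 0 ≤ t ∧ w t ≤ m} with hB_def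
    have hBne : B.Nonempty := ⟨t₁', ht₁', hwt₁'⟩
    have hBbdd : BddBelow B := ⟨0, fun x hx => hx.1⟩
    set t₁ := sInf B with ht₁_def
    have ht₁0 : 0 ≤ t₁ := le_csInf hBne fun x hx => hx.1
    have ht₁B : t₁ ∈ B := by
      obtain ⟨u, _, hu_tend, hu_mem⟩ := exists_seq_tendsto_sInf hBne hBbdd
      refine ⟨ht₁0, ?_⟩
      have : Tendsto (w ∘ u) atTop (𝓝 (w t₁)) :=
        ((hwc t₁ ht₁0).tendsto).comp hu_tend
      exact le_of_tendsto this (Eventually.of_forall fun n => (hu_mem n).2)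
    have hlt : ∀ s, 0 ≤ s → s < t₁ → m < w s := by
      intro s hs hst
      by_contra hcon
      push_neg at hcon
      exact absurd (csInf_le hBbdd ⟨hs, hcon⟩) (not_le.2 hst)
    have hmono : MonotoneOn w (Icc 0 t₁) := by
      apply monotoneOn_of_deriv_nonneg (convex_Icc 0 t₁)
      · exact fun x hx => (hwc x hx.1).continuousWithinAt
      · intro x hx
        rw [interior_Icc] at hx
        exact ((hw' x hx.1.le).differentiableAt).differentiableWithinAt
      · intro x hx
        rw [interior_Icc] at hx
        have hx0 : (0:ℝ) ≤ x := hx.1.le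
        rw [(hw' x hx0).deriv]
        have hwx : 0 < w x := lt_trans hm (hlt x hx0 hx.2)
        have := hc_nonneg x hx0
        have := hk_nonneg x hx0
        have h1 : (0:ℝ) ≤ w x ^ p := Real.rpow_nonneg hwx.le p
        have h2 : (0:ℝ) ≤ w x ^ l := Real.rpow_nonneg hwx.le l
        positivity
    have : w 0 ≤ w t₁ := hmono ⟨le_refl 0, ht₁0⟩ ⟨ht₁0, le_refl t₁⟩ ht₁0
    rw [hw0] at this
    have := ht₁B.2
    linarith
  -- main part
  set q : ℝ := min p l with hq_def
  have hq1 : 1 < q := lt_min hp hl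
  set C : ℝ := min (m ^ (p - q)) (m ^ (l - q)) with hC_def
  have hC : 0 < C := lt_min (Real.rpow_pos_of_pos hm _) (Real.rpow_pos_of_pos hm _)
  set K : ℝ := (q - 1) * C with hK_def
  have hK : 0 < K := mul_pos (by linarith) hC
  set F : ℝ → ℝ := fun T => ∫ t in (0:ℝ)..T, (c₀ t + k₀ t) with hF_def
  set g : ℝ → ℝ := fun t => w t ^ (1 - q) with hg_def
  set h : ℝ → ℝ := fun t => g t + K * F t with hh_def
  have hck_cont : ContinuousOn (fun s => c₀ s + k₀ s) (Ici 0) := hc_cont.add hk_cont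
  have hFderiv : ∀ t > (0:ℝ), HasDerivAt F (c₀ t + k₀ t) t := by
    intro t ht
    have hint : IntervalIntegrable (fun s => c₀ s + k₀ s) volume 0 t := by
      apply ContinuousOn.intervalIntegrable
      apply hck_cont.mono
      rw [uIcc_of_le ht.le]
      exact Icc_subset_Ici_self
    have hca : ContinuousAt (fun s => c₀ s + k₀ s) t :=
      hck_cont.continuousAt (Ici_mem_nhds ht)
    have hms : StronglyMeasurableAtFilter (fun s => c₀ s + k₀ s) (𝓝 t) volume :=
      ContinuousOn.stronglyMeasurableAtFilter isOpen_Ioi (hck_cont.mono Ioi_subset_Ici_self) t ht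
    exact intervalIntegral.integral_hasDerivAt_right hint hms hca
  have hhd : ∀ t > (0:ℝ), HasDerivAt h
      ((c₀ t * w t ^ p + k₀ t * w t ^ l) * (1 - q) * w t ^ (1 - q - 1) + K * (c₀ t + k₀ t)) t := by
    intro t ht
    have hwne : w t ≠ 0 := (lt_trans hm (hpos t ht.le)).ne'
    exact ((hw' t ht.le).rpow_const (Or.inl hwne)).add ((hFderiv t ht).const_mul K)
  have hderiv_le : ∀ t > (0:ℝ),
      (c₀ t * w t ^ p + k₀ t * w t ^ l) * (1 - q) * w t ^ (1 - q - 1) + K * (c₀ t + k₀ t) ≤ 0 := by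
    intro t ht
    have ht0 : (0:ℝ) ≤ t := ht.le
    have hW : 0 < w t := lt_trans hm (hpos t ht0)
    have hWm : m ≤ w t := (hpos t ht0).le
    have hc := hc_nonneg t ht0
    have hk := hk_nonneg t ht0
    have hWq : (0:ℝ) ≤ w t ^ q := Real.rpow_nonneg hW.le q
    have hWpq : C ≤ w t ^ (p - q) :=
      le_trans (min_le_left _ _) (Real.rpow_le_rpow hm.le hWm (by simp [hq_def, min_le_left]))
    have hWlq : C ≤ w t ^ (l - q) :=
      le_trans (min_le_right _ _) (Real.rpow_le_rpow hm.le hWm (by simp [hq_def, min_le_right]))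
    have hWp : w t ^ p = w t ^ q * w t ^ (p - q) := by
      rw [← Real.rpow_add hW]; ring_nf
    have hWl : w t ^ l = w t ^ q * w t ^ (l - q) := by
      rw [← Real.rpow_add hW]; ring_nf
    have hD : C * (c₀ t + k₀ t) * w t ^ q ≤ c₀ t * w t ^ p + k₀ t * w t ^ l := by
      rw [hWp, hWl]
      nlinarith [mul_le_mul_of_nonneg_left hWpq (mul_nonneg hc hWq),
        mul_le_mul_of_nonneg_left hWlq (mul_nonneg hk hWq)]
    have hneg : (1 - q : ℝ) ≤ 0 := by linarith
    have h1 : (c₀ t * w t ^ p + k₀ t * w t ^ l) * (1 - q) ≤ C * (c₀ t + k₀ t) * w t ^ q * (1 - q) :=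
      mul_le_mul_of_nonpos_right hD hneg
    have hWnq : (0:ℝ) ≤ w t ^ (1 - q - 1) := Real.rpow_nonneg hW.le _
    have h2 := mul_le_mul_of_nonneg_right h1 hWnq
    have hone : w t ^ q * w t ^ (1 - q - 1) = 1 := by
      rw [← Real.rpow_add hW]
      norm_num
    calc (c₀ t * w t ^ p + k₀ t * w t ^ l) * (1 - q) * w t ^ (1 - q - 1) + K * (c₀ t + k₀ t)
        ≤ C * (c₀ t + k₀ t) * w t ^ q * (1 - q) * w t ^ (1 - q - 1) + K * (c₀ t + k₀ t) := by
          linarith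
      _ = (C * (c₀ t + k₀ t) * (1 - q)) * (w t ^ q * w t ^ (1 - q - 1)) + K * (c₀ t + k₀ t) := by
          ring
      _ = 0 := by rw [hone]; simp only [hK_def]; ring
  -- choose T
  obtain ⟨T, hTF, hT0⟩ := ((hdiv.eventually_ge_atTop (g 0 / K)).and (eventually_ge_atTop (0:ℝ))).exists
  have hanti : AntitoneOn h (Icc 0 T) := by
    apply antitoneOn_of_deriv_nonpos (convex_Icc 0 T)
    · have hintOn : IntegrableOn (fun s => c₀ s + k₀ s) (uIcc 0 T) volume := by
        apply ContinuousOn.integrableOn_uIcc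
        apply hck_cont.mono
        rw [uIcc_of_le hT0]
        exact Icc_subset_Ici_self
      have hFc : ContinuousOn F (Icc 0 T) := by
        have := intervalIntegral.continuousOn_primitive_interval hintOn
        rwa [uIcc_of_le hT0] at this
      have hgc : ContinuousOn g (Icc 0 T) := by
        intro x hx
        have hwx : w x ≠ 0 := (lt_trans hm (hpos x hx.1)).ne'
        exact ((hwc x hx.1).rpow_const (Or.inl hwx)).continuousWithinAt
      exact hgc.add (continuousOn_const.mul hFc)
    · intro x hx
      rw [interior_Icc] at hx
      exact (hhd x hx.1).differentiableAt.differentiableWithinAt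
    · intro x hx
      rw [interior_Icc] at hx
      rw [(hhd x hx.1).deriv]
      exact hderiv_le x hx.1
  have hhT : h T ≤ h 0 := hanti (left_mem_Icc.2 hT0) (right_mem_Icc.2 hT0) hT0
  have hF0 : F 0 = 0 := intervalIntegral.integral_same
  have hgT : 0 < g T := Real.rpow_pos_of_pos (lt_trans hm (hpos T hT0)) _
  have hKF : g 0 ≤ K * F T := by
    have := mul_le_mul_of_nonneg_left hTF hK.le
    rwa [mul_div_cancel₀ _ hK.ne'] at this
  have hh0 : h 0 = g 0 := by simp [hh_def, hF0]
  have hhTval : h T = g T + K * F T := rfl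
  linarith [hhT, hgT, hKF, hh0.symm ▸ hhT]
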